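/- If Γ ⊂ T•(U \ I) is a closed conic set whose closure in T•U satisfies the conormal landing condition (closure ∩ T•_I U ⊆ N*(I)), then there exists an open neighborhood V of I such that every (x,h;ξ,η) ∈ Γ ∩ T•V has η ≠ 0. -/
import Mathlib


open scoped BigOperators

/-- If `Γ ⊆ T•(U \ I)` is closed conic and its closure satisfies the conormal
landing condition (closure `∩ T•_I U ⊆ N*(I)`), then there is an open
neighborhood `V` of `I = {h=0}` such that every `(x,h;ξ,η) ∈ Γ` with
`(x,h) ∈ V` has `η ≠ 0`.  Covectors are modeled as pairs `(ξ,η) ∈ ℝⁿ × ℝᵈ`. -/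
theorem conormal_landing_gives_neighborhood (n d : ℕ)
    (U : Set ((Fin n → ℝ) × (Fin d → ℝ))) (hU : IsOpen U)
    (hIU : {p : (Fin n → ℝ) × (Fin d → ℝ) | p.2 = 0} ⊆ U)
    (Γ : Set (((Fin n → ℝ) × (Fin d → ℝ)) × ((Fin n → ℝ) × (Fin d → ℝ))))
    (hΓsub : Γ ⊆ (U \ {p : (Fin n → ℝ) × (Fin d → ℝ) | p.2 = 0}) ×ˢ
      {v : (Fin n → ℝ) × (Fin d → ℝ) | v ≠ 0})
    (hΓclosed : closure Γ ∩
      ((U \ {p : (Fin n → ℝ) × (Fin d → ℝ) | p.2 = 0}) ×ˢ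
        {v : (Fin n → ℝ) × (Fin d → ℝ) | v ≠ 0}) ⊆ Γ)
    (hconic : ∀ c : ℝ, 0 < c → ∀ q ∈ Γ, (q.1, c • q.2) ∈ Γ)
    (hland : closure Γ ∩
        {q : ((Fin n → ℝ) × (Fin d → ℝ)) × ((Fin n → ℝ) × (Fin d → ℝ)) |
          q.1.2 = 0 ∧ q.2 ≠ 0} ⊆
      {q : ((Fin n → ℝ) × (Fin d → ℝ)) × ((Fin n → ℝ) × (Fin d → ℝ)) |
        q.1.2 = 0 ∧ q.2.1 = 0 ∧ q.2.2 ≠ 0}) :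
    ∃ V : Set ((Fin n → ℝ) × (Fin d → ℝ)), IsOpen V ∧
      {p : (Fin n → ℝ) × (Fin d → ℝ) | p.2 = 0} ⊆ V ∧ V ⊆ U ∧
      ∀ q ∈ Γ, q.1 ∈ V → q.2.2 ≠ 0 := by
  classical
  -- the "bad" set of points of Γ with η = 0
  set S := {q ∈ Γ | q.2.2 = 0} with hS
  set C := closure (Prod.fst '' S) with hC
  refine ⟨U \ C, hU.sdiff isClosed_closure, ?_, fun p hp => hp.1, ?_⟩
  · -- I ⊆ U \ C
    intro p hp
    refine ⟨hIU hp, fun hpC => ?_⟩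
    -- get a sequence in the base projection of S converging to p
    obtain ⟨x, hx, hxlim⟩ := mem_closure_iff_seq_limit.mp hpC
    choose q hqS hqfst using fun k => hx k
    -- normalize the covectors
    set v := fun k => ‖(q k).2‖⁻¹ • (q k).2 with hv
    have hq2ne : ∀ k, (q k).2 ≠ 0 := fun k => (hΓsub (hqS k).1).2
    have hnorm : ∀ k, ‖v k‖ = 1 := by
      intro k
      rw [hv]
      simp [norm_smul, abs_of_nonneg (inv_nonneg.mpr (norm_nonneg _)),
        inv_mul_cancel₀ (norm_ne_zero_iff.mpr (hq2ne k))]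
    have hv2 : ∀ k, (v k).2 = 0 := by
      intro k
      have : (v k).2 = ‖(q k).2‖⁻¹ • (q k).2.2 := rfl
      rw [this, (hqS k).2, smul_zero]
    have hmemΓ : ∀ k, ((q k).1, v k) ∈ Γ := by
      intro k
      exact hconic _ (inv_pos.mpr (norm_pos_iff.mpr (hq2ne k))) _ (hqS k).1
    -- compact set of normalized covectors with η = 0
    set K := {w : (Fin n → ℝ) × (Fin d → ℝ) | ‖w‖ = 1 ∧ w.2 = 0} with hK
    have hKclosed : IsClosed K :=
      (isClosed_eq continuous_norm continuous_const).inter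
        (isClosed_eq (continuous_snd) continuous_const)
    have hKcompact : IsCompact K := by
      refine (isCompact_closedBall (0 : (Fin n → ℝ) × (Fin d → ℝ)) 1).of_isClosed_subset hKclosed ?_
      intro w hw
      simp [Metric.mem_closedBall, dist_eq_norm, hw.1]
    have hvK : ∀ k, v k ∈ K := fun k => ⟨hnorm k, hv2 k⟩
    obtain ⟨w, hwK, φ, hφ, hwlim⟩ := hKcompact.tendsto_subseq hvK
    -- the limit point lies in closure Γ
    have hlim : Filter.Tendsto (fun k => ((q (φ k)).1, v (φ k))) Filter.atTop
        (nhds (p, w)) := by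
      refine Filter.Tendsto.prodMk_nhds ?_ hwlim
      have : (fun k => (q (φ k)).1) = fun k => x (φ k) := by
        funext k; exact hqfst (φ k)
      rw [this]
      exact hxlim.comp hφ.tendsto_atTop
    have hcl : (p, w) ∈ closure Γ :=
      mem_closure_of_tendsto hlim (Filter.Eventually.of_forall fun k => hmemΓ (φ k))
    have hwne : w ≠ 0 := by
      intro h
      have h1 := hwK.1
      rw [h, norm_zero] at h1
      exact one_ne_zero h1.symm
    have := hland ⟨hcl, hp, hwne⟩
    exact this.2.2 hwK.2
  · -- points of Γ over V have η ≠ 0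
    intro q hq hqV hq2
    exact hqV.2 (subset_closure ⟨q, ⟨hq, hq2⟩, rfl⟩)
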